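/- Let μ be a probability measure on the group G₂ = (ℤ/2ℤ)² whose support contains exactly 3 elements, and let a_max = max_{x∈G₂} μ({x}). Then μ ∈ TEC(G₂) if and only if a_max ≥ 1/2. -/
import Mathlib


open scoped BigOperators

/-- The group `G₂ = (ℤ/2ℤ)²`. -/
abbrev G2 : Type := ZMod 2 × ZMod 2

/-- The character pairing `(x,y) = (-1)^(x₁y₁+x₂y₂)`. -/
noncomputable def pairing2 (x y : G2) : ℝ :=
  (-1 : ℝ) ^ (x.1.val * y.1.val + x.2.val * y.2.val)

/-- A probability measure on `G₂`, given by its mass function. -/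
def IsProb2 (p : G2 → ℝ) : Prop := (∀ x, 0 ≤ p x) ∧ ∑ x : G2, p x = 1

/-- The characteristic function `μ̂(y) = Σ_x (x,y) μ({x})`. -/
noncomputable def charFn2 (p : G2 → ℝ) (y : G2) : ℝ := ∑ x : G2, pairing2 x y * p x

/-- The measure of a set `E ⊆ G₂`. -/
noncomputable def measOf2 (p : G2 → ℝ) (E : Set G2) : ℝ := ∑ x : G2, E.indicator p x

/-- `μ` has a trivial equivalence class: every probability measure `ν` with
`|ν̂| = |μ̂|` is a shift `μₓ` of `μ` (central symmetry is the identity on `G₂`). -/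
def TEC2 (p : G2 → ℝ) : Prop :=
  ∀ q : G2 → ℝ, IsProb2 q → (∀ y : G2, |charFn2 q y| = |charFn2 p y|) →
    ∃ x : G2, ∀ e : G2, q e = p (e + x)

/-- The support of `μ`: the set of points of positive mass. -/
def support2 (p : G2 → ℝ) : Set G2 := {x : G2 | 0 < p x}

/-- `a_max = max_{x∈G₂} μ({x})`. -/
noncomputable def amax2 (p : G2 → ℝ) : ℝ := sSup (Set.range p)

/- ### Auxiliary lemmas -/

lemma sumG2 (f : G2 → ℝ) : ∑ x : G2, f x = f (0,0) + f (1,0) + f (0,1) + f (1,1) := by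
  rw [Fintype.sum_prod_type]
  rw [show ((Finset.univ : Finset (ZMod 2))) = {0, 1} from by decide]
  simp [Finset.sum_pair (show (0:ZMod 2) ≠ 1 by decide)]
  ring

lemma char0G2 (p : G2 → ℝ) :
    charFn2 p (0,0) = p (0,0) + p (1,0) + p (0,1) + p (1,1) := by
  rw [charFn2, sumG2]
  norm_num [pairing2, ZMod.val_zero, ZMod.val_one]

lemma char1G2 (p : G2 → ℝ) :
    charFn2 p (1,0) = p (0,0) - p (1,0) + p (0,1) - p (1,1) := by
  rw [charFn2, sumG2]
  norm_num [pairing2, ZMod.val_zero, ZMod.val_one]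
  ring

lemma char2G2 (p : G2 → ℝ) :
    charFn2 p (0,1) = p (0,0) + p (1,0) - p (0,1) - p (1,1) := by
  rw [charFn2, sumG2]
  norm_num [pairing2, ZMod.val_zero, ZMod.val_one]
  ring

lemma char3G2 (p : G2 → ℝ) :
    charFn2 p (1,1) = p (0,0) - p (1,0) - p (0,1) + p (1,1) := by
  rw [charFn2, sumG2]
  norm_num [pairing2, ZMod.val_zero, ZMod.val_one]
  ring

lemma e4G2 : ∀ e : G2, e = (0,0) ∨ e = (1,0) ∨ e = (0,1) ∨ e = (1,1) := by decide

lemma xaddG2 : ∀ x : G2, x + x = 0 := by decide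

lemma honeoneG2 : (1 : ZMod 2) + 1 = 0 := by decide

lemma habseqG2 (x y : ℝ) (h : x = y) : |x| = |y| := by rw [h]

lemma habsnegG2 (x y : ℝ) (h : x = -y) : |x| = |y| := by rw [h, abs_neg]

lemma coreG2 (a b c d A B C D : ℝ) (ha : 0 < a) (hb : 0 < b) (hc : 0 < c) (hd : d = 0)
    (hsum : a + b + c + d = 1)
    (hmax : 1/2 ≤ a ∨ 1/2 ≤ b ∨ 1/2 ≤ c)
    (hA : 0 ≤ A) (hB : 0 ≤ B) (hC : 0 ≤ C) (hD : 0 ≤ D)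
    (hqs : A + B + C + D = 1)
    (h1 : |A - B + C - D| = |a - b + c - d|)
    (h2 : |A + B - C - D| = |a + b - c - d|)
    (h3 : |A - B - C + D| = |a - b - c + d|) :
    (A = a ∧ B = b ∧ C = c ∧ D = d) ∨ (A = b ∧ B = a ∧ C = d ∧ D = c) ∨
    (A = c ∧ B = d ∧ C = a ∧ D = b) ∨ (A = d ∧ B = c ∧ C = b ∧ D = a) := by
  subst hd
  rw [abs_eq_abs] at h1 h2 h3
  rcases h1 with h1 | h1 <;> rcases h2 with h2 | h2 <;> rcases h3 with h3 | h3
  · exact Or.inl ⟨by linarith, by linarith, by linarith, by linarith⟩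
  · rcases hmax with hm | hm | hm
    · exact Or.inl ⟨by linarith, by linarith, by linarith, by linarith⟩
    · exact Or.inr (Or.inl ⟨by linarith, by linarith, by linarith, by linarith⟩)
    · exact Or.inr (Or.inr (Or.inl ⟨by linarith, by linarith, by linarith, by linarith⟩))
  · rcases hmax with hm | hm | hm
    · exact Or.inr (Or.inr (Or.inl ⟨by linarith, by linarith, by linarith, by linarith⟩))
    · exact Or.inr (Or.inr (Or.inr ⟨by linarith, by linarith, by linarith, by linarith⟩))
    · exact Or.inl ⟨by linarith, by linarith, by linarith, by linarith⟩
  · exact Or.inr (Or.inr (Or.inl ⟨by linarith, by linarith, by linarith, by linarith⟩))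
  · rcases hmax with hm | hm | hm
    · exact Or.inr (Or.inl ⟨by linarith, by linarith, by linarith, by linarith⟩)
    · exact Or.inl ⟨by linarith, by linarith, by linarith, by linarith⟩
    · exact Or.inr (Or.inr (Or.inr ⟨by linarith, by linarith, by linarith, by linarith⟩))
  · exact Or.inr (Or.inl ⟨by linarith, by linarith, by linarith, by linarith⟩)
  · exact Or.inr (Or.inr (Or.inr ⟨by linarith, by linarith, by linarith, by linarith⟩))
  · rcases hmax with hm | hm | hm
    · exact Or.inr (Or.inr (Or.inr ⟨by linarith, by linarith, by linarith, by linarith⟩))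
    · exact Or.inr (Or.inr (Or.inl ⟨by linarith, by linarith, by linarith, by linarith⟩))
    · exact Or.inr (Or.inl ⟨by linarith, by linarith, by linarith, by linarith⟩)

set_option maxHeartbeats 4000000 in
/-- Theorem 3, case 2: if the support of `μ` has exactly 3 elements,
then `μ ∈ TEC(G₂)` iff `a_max ≥ 1/2`. -/
theorem stmt16 (p : G2 → ℝ) (hp : IsProb2 p)
    (hsupp : (support2 p).ncard = 3) :
    TEC2 p ↔ 1/2 ≤ amax2 p := by
  obtain ⟨hnn, hsum⟩ := hp
  have hsum4 : p (0,0) + p (1,0) + p (0,1) + p (1,1) = 1 := by rw [← sumG2]; exact hsum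
  have h4card : Nat.card G2 = 4 := by rw [Nat.card_eq_fintype_card]; rfl
  have hcompl : (support2 p)ᶜ.ncard = 1 := by
    have h := Set.ncard_add_ncard_compl (support2 p)
    rw [hsupp, h4card] at h
    omega
  obtain ⟨m, hm⟩ := Set.ncard_eq_one.mp hcompl
  have hm0 : p m = 0 := by
    have hmem : m ∈ (support2 p)ᶜ := by rw [hm]; exact rfl
    have hnot : ¬ 0 < p m := hmem
    linarith [hnn m]
  have hpos : ∀ x : G2, x ≠ m → 0 < p x := by
    intro x hx
    by_contra hle
    have hx' : x ∈ (support2 p)ᶜ := fun hs => hle hs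
    rw [hm] at hx'
    exact hx hx'
  have hbdd : BddAbove (Set.range p) := (Set.finite_range p).bddAbove
  have hle_amax : ∀ x : G2, p x ≤ amax2 p := fun x => le_csSup hbdd ⟨x, rfl⟩
  have hamax_le : amax2 p ≤ max (max (p (0,0)) (p (1,0))) (max (p (0,1)) (p (1,1))) := by
    apply csSup_le (Set.range_nonempty p)
    rintro r ⟨x, rfl⟩
    rcases e4G2 x with rfl|rfl|rfl|rfl
    · exact le_max_of_le_left (le_max_left _ _)
    · exact le_max_of_le_left (le_max_right _ _)
    · exact le_max_of_le_right (le_max_left _ _)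
    · exact le_max_of_le_right (le_max_right _ _)
  constructor
  · -- TEC → 1/2 ≤ amax
    intro htec
    by_contra hlt
    push_neg at hlt
    have hsml : ∀ x : G2, p x < 1/2 := fun x => lt_of_le_of_lt (hle_amax x) hlt
    rcases e4G2 m with rfl|rfl|rfl|rfl
    · -- m = (0,0)
      set q : G2 → ℝ := fun e =>
        if e = ((0,0):G2) then 1/2 - p (0,1)
        else if e = ((1,0):G2) then p (1,0) + p (0,1) - 1/2
        else if e = ((0,1):G2) then 1/2
        else p (0,1) + p (1,1) - 1/2 with hqdef
      have hv0 : q (0,0) = 1/2 - p (0,1) := by simp only [hqdef]; rw [if_pos trivial]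
      have hv1 : q (1,0) = p (1,0) + p (0,1) - 1/2 := by simp only [hqdef]; rw [if_neg (show ((1,0):G2) ≠ (0,0) by decide), if_pos trivial]
      have hv2 : q (0,1) = 1/2 := by simp only [hqdef]; rw [if_neg (show ((0,1):G2) ≠ (0,0) by decide), if_neg (show ((0,1):G2) ≠ (1,0) by decide), if_pos trivial]
      have hv3 : q (1,1) = p (0,1) + p (1,1) - 1/2 := by simp only [hqdef]; rw [if_neg (show ((1,1):G2) ≠ (0,0) by decide), if_neg (show ((1,1):G2) ≠ (1,0) by decide), if_neg (show ((1,1):G2) ≠ (0,1) by decide)]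
      have hqpos : ∀ e : G2, 0 < q e := by
        intro e
        rcases e4G2 e with rfl|rfl|rfl|rfl
        · rw [hv0]; linarith [hsml (0,1)]
        · rw [hv1]; linarith [hsml (1,1), hm0, hsum4]
        · rw [hv2]; norm_num
        · rw [hv3]; linarith [hsml (1,0), hm0, hsum4]
      have habs' : ∀ y : G2, |charFn2 q y| = |charFn2 p y| := by
        intro y
        rcases e4G2 y with rfl|rfl|rfl|rfl
        · rw [char0G2, char0G2, hv0, hv1, hv2, hv3]
          apply habseqG2; linarith [hm0, hsum4]
        · rw [char1G2, char1G2, hv0, hv1, hv2, hv3]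
          apply habsnegG2; linarith [hm0, hsum4]
        · rw [char2G2, char2G2, hv0, hv1, hv2, hv3]
          apply habseqG2; linarith [hm0, hsum4]
        · rw [char3G2, char3G2, hv0, hv1, hv2, hv3]
          apply habseqG2; linarith [hm0, hsum4]
      obtain ⟨x, hx⟩ := htec q ⟨fun e => le_of_lt (hqpos e),
        by rw [sumG2, hv0, hv1, hv2, hv3]; linarith [hm0, hsum4]⟩ habs'
      have hxx := hx ((0,0) + x)
      rw [add_assoc, xaddG2, add_zero, hm0] at hxx
      exact (hqpos _).ne' hxx
    · -- m = (1,0)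
      set q : G2 → ℝ := fun e =>
        if e = ((0,0):G2) then 1/2
        else if e = ((1,0):G2) then 1/2 - p (0,0)
        else if e = ((0,1):G2) then p (0,1) + p (0,0) - 1/2
        else p (1,1) + p (0,0) - 1/2 with hqdef
      have hv0 : q (0,0) = 1/2 := by simp only [hqdef]; rw [if_pos trivial]
      have hv1 : q (1,0) = 1/2 - p (0,0) := by simp only [hqdef]; rw [if_neg (show ((1,0):G2) ≠ (0,0) by decide), if_pos trivial]
      have hv2 : q (0,1) = p (0,1) + p (0,0) - 1/2 := by simp only [hqdef]; rw [if_neg (show ((0,1):G2) ≠ (0,0) by decide), if_neg (show ((0,1):G2) ≠ (1,0) by decide), if_pos trivial]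
      have hv3 : q (1,1) = p (1,1) + p (0,0) - 1/2 := by simp only [hqdef]; rw [if_neg (show ((1,1):G2) ≠ (0,0) by decide), if_neg (show ((1,1):G2) ≠ (1,0) by decide), if_neg (show ((1,1):G2) ≠ (0,1) by decide)]
      have hqpos : ∀ e : G2, 0 < q e := by
        intro e
        rcases e4G2 e with rfl|rfl|rfl|rfl
        · rw [hv0]; norm_num
        · rw [hv1]; linarith [hsml (0,0)]
        · rw [hv2]; linarith [hsml (1,1), hm0, hsum4]
        · rw [hv3]; linarith [hsml (0,1), hm0, hsum4]
      have habs' : ∀ y : G2, |charFn2 q y| = |charFn2 p y| := by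
        intro y
        rcases e4G2 y with rfl|rfl|rfl|rfl
        · rw [char0G2, char0G2, hv0, hv1, hv2, hv3]
          apply habseqG2; linarith [hm0, hsum4]
        · rw [char1G2, char1G2, hv0, hv1, hv2, hv3]
          apply habseqG2; linarith [hm0, hsum4]
        · rw [char2G2, char2G2, hv0, hv1, hv2, hv3]
          apply habsnegG2; linarith [hm0, hsum4]
        · rw [char3G2, char3G2, hv0, hv1, hv2, hv3]
          apply habseqG2; linarith [hm0, hsum4]
      obtain ⟨x, hx⟩ := htec q ⟨fun e => le_of_lt (hqpos e),
        by rw [sumG2, hv0, hv1, hv2, hv3]; linarith [hm0, hsum4]⟩ habs'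
      have hxx := hx ((1,0) + x)
      rw [add_assoc, xaddG2, add_zero, hm0] at hxx
      exact (hqpos _).ne' hxx
    · -- m = (0,1)
      set q : G2 → ℝ := fun e =>
        if e = ((0,0):G2) then 1/2
        else if e = ((1,0):G2) then p (1,0) + p (0,0) - 1/2
        else if e = ((0,1):G2) then 1/2 - p (0,0)
        else p (1,1) + p (0,0) - 1/2 with hqdef
      have hv0 : q (0,0) = 1/2 := by simp only [hqdef]; rw [if_pos trivial]
      have hv1 : q (1,0) = p (1,0) + p (0,0) - 1/2 := by simp only [hqdef]; rw [if_neg (show ((1,0):G2) ≠ (0,0) by decide), if_pos trivial]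
      have hv2 : q (0,1) = 1/2 - p (0,0) := by simp only [hqdef]; rw [if_neg (show ((0,1):G2) ≠ (0,0) by decide), if_neg (show ((0,1):G2) ≠ (1,0) by decide), if_pos trivial]
      have hv3 : q (1,1) = p (1,1) + p (0,0) - 1/2 := by simp only [hqdef]; rw [if_neg (show ((1,1):G2) ≠ (0,0) by decide), if_neg (show ((1,1):G2) ≠ (1,0) by decide), if_neg (show ((1,1):G2) ≠ (0,1) by decide)]
      have hqpos : ∀ e : G2, 0 < q e := by
        intro e
        rcases e4G2 e with rfl|rfl|rfl|rfl
        · rw [hv0]; norm_num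
        · rw [hv1]; linarith [hsml (1,1), hm0, hsum4]
        · rw [hv2]; linarith [hsml (0,0)]
        · rw [hv3]; linarith [hsml (1,0), hm0, hsum4]
      have habs' : ∀ y : G2, |charFn2 q y| = |charFn2 p y| := by
        intro y
        rcases e4G2 y with rfl|rfl|rfl|rfl
        · rw [char0G2, char0G2, hv0, hv1, hv2, hv3]
          apply habseqG2; linarith [hm0, hsum4]
        · rw [char1G2, char1G2, hv0, hv1, hv2, hv3]
          apply habsnegG2; linarith [hm0, hsum4]
        · rw [char2G2, char2G2, hv0, hv1, hv2, hv3]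
          apply habseqG2; linarith [hm0, hsum4]
        · rw [char3G2, char3G2, hv0, hv1, hv2, hv3]
          apply habseqG2; linarith [hm0, hsum4]
      obtain ⟨x, hx⟩ := htec q ⟨fun e => le_of_lt (hqpos e),
        by rw [sumG2, hv0, hv1, hv2, hv3]; linarith [hm0, hsum4]⟩ habs'
      have hxx := hx ((0,1) + x)
      rw [add_assoc, xaddG2, add_zero, hm0] at hxx
      exact (hqpos _).ne' hxx
    · -- m = (1,1)
      set q : G2 → ℝ := fun e =>
        if e = ((0,0):G2) then 1/2
        else if e = ((1,0):G2) then p (0,0) + p (1,0) - 1/2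
        else if e = ((0,1):G2) then p (0,0) + p (0,1) - 1/2
        else 1/2 - p (0,0) with hqdef
      have hv0 : q (0,0) = 1/2 := by simp only [hqdef]; rw [if_pos trivial]
      have hv1 : q (1,0) = p (0,0) + p (1,0) - 1/2 := by simp only [hqdef]; rw [if_neg (show ((1,0):G2) ≠ (0,0) by decide), if_pos trivial]
      have hv2 : q (0,1) = p (0,0) + p (0,1) - 1/2 := by simp only [hqdef]; rw [if_neg (show ((0,1):G2) ≠ (0,0) by decide), if_neg (show ((0,1):G2) ≠ (1,0) by decide), if_pos trivial]
      have hv3 : q (1,1) = 1/2 - p (0,0) := by simp only [hqdef]; rw [if_neg (show ((1,1):G2) ≠ (0,0) by decide), if_neg (show ((1,1):G2) ≠ (1,0) by decide), if_neg (show ((1,1):G2) ≠ (0,1) by decide)]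
      have hqpos : ∀ e : G2, 0 < q e := by
        intro e
        rcases e4G2 e with rfl|rfl|rfl|rfl
        · rw [hv0]; norm_num
        · rw [hv1]; linarith [hsml (0,1), hm0, hsum4]
        · rw [hv2]; linarith [hsml (1,0), hm0, hsum4]
        · rw [hv3]; linarith [hsml (0,0)]
      have habs' : ∀ y : G2, |charFn2 q y| = |charFn2 p y| := by
        intro y
        rcases e4G2 y with rfl|rfl|rfl|rfl
        · rw [char0G2, char0G2, hv0, hv1, hv2, hv3]
          apply habseqG2; linarith [hm0, hsum4]
        · rw [char1G2, char1G2, hv0, hv1, hv2, hv3]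
          apply habseqG2; linarith [hm0, hsum4]
        · rw [char2G2, char2G2, hv0, hv1, hv2, hv3]
          apply habseqG2; linarith [hm0, hsum4]
        · rw [char3G2, char3G2, hv0, hv1, hv2, hv3]
          apply habsnegG2; linarith [hm0, hsum4]
      obtain ⟨x, hx⟩ := htec q ⟨fun e => le_of_lt (hqpos e),
        by rw [sumG2, hv0, hv1, hv2, hv3]; linarith [hm0, hsum4]⟩ habs'
      have hxx := hx ((1,1) + x)
      rw [add_assoc, xaddG2, add_zero, hm0] at hxx
      exact (hqpos _).ne' hxx
  · -- 1/2 ≤ amax → TEC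
    intro hge q hq habs
    obtain ⟨hqnn, hqsum⟩ := hq
    have hqsum4 : q (0,0) + q (1,0) + q (0,1) + q (1,1) = 1 := by rw [← sumG2]; exact hqsum
    have h1 := habs (1,0)
    rw [char1G2 q, char1G2 p] at h1
    have h2 := habs (0,1)
    rw [char2G2 q, char2G2 p] at h2
    have h3 := habs (1,1)
    rw [char3G2 q, char3G2 p] at h3
    have hmx := le_trans hge hamax_le
    rw [le_max_iff, le_max_iff, le_max_iff] at hmx
    rcases e4G2 m with rfl|rfl|rfl|rfl
    · -- m = (0,0)
      have hmax3 : 1/2 ≤ p (1,1) ∨ 1/2 ≤ p (1,0) ∨ 1/2 ≤ p (0,1) := by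
        rcases hmx with (h|h)|(h|h)
        · exact absurd h (by rw [hm0]; norm_num)
        · exact Or.inr (Or.inl h)
        · exact Or.inr (Or.inr h)
        · exact Or.inl h
      have h1' : |q (1,1) - q (1,0) + q (0,1) - q (0,0)| =
          |p (1,1) - p (1,0) + p (0,1) - p (0,0)| := by
        rw [show q (1,1) - q (1,0) + q (0,1) - q (0,0) =
              -(q (0,0) + q (1,0) - q (0,1) - q (1,1)) by ring,
            show p (1,1) - p (1,0) + p (0,1) - p (0,0) =
              -(p (0,0) + p (1,0) - p (0,1) - p (1,1)) by ring,
            abs_neg, abs_neg]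
        exact h2
      have h2' : |q (1,1) + q (1,0) - q (0,1) - q (0,0)| =
          |p (1,1) + p (1,0) - p (0,1) - p (0,0)| := by
        rw [show q (1,1) + q (1,0) - q (0,1) - q (0,0) =
              -(q (0,0) - q (1,0) + q (0,1) - q (1,1)) by ring,
            show p (1,1) + p (1,0) - p (0,1) - p (0,0) =
              -(p (0,0) - p (1,0) + p (0,1) - p (1,1)) by ring,
            abs_neg, abs_neg]
        exact h1
      have h3' : |q (1,1) - q (1,0) - q (0,1) + q (0,0)| =
          |p (1,1) - p (1,0) - p (0,1) + p (0,0)| := by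
        rw [show q (1,1) - q (1,0) - q (0,1) + q (0,0) =
              q (0,0) - q (1,0) - q (0,1) + q (1,1) by ring,
            show p (1,1) - p (1,0) - p (0,1) + p (0,0) =
              p (0,0) - p (1,0) - p (0,1) + p (1,1) by ring]
        exact h3
      have hres := coreG2 (p (1,1)) (p (1,0)) (p (0,1)) (p (0,0))
        (q (1,1)) (q (1,0)) (q (0,1)) (q (0,0))
        (hpos _ (by decide)) (hpos _ (by decide)) (hpos _ (by decide)) hm0
        (by linarith) hmax3 (hqnn _) (hqnn _) (hqnn _) (hqnn _)
        (by linarith) h1' h2' h3'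
      rcases hres with ⟨ha,hb,hc,hd⟩|⟨ha,hb,hc,hd⟩|⟨ha,hb,hc,hd⟩|⟨ha,hb,hc,hd⟩
      · exact ⟨(0,0), fun e => by
          rcases e4G2 e with rfl|rfl|rfl|rfl <;>
            simp only [Prod.mk_add_mk, add_zero, zero_add, honeoneG2] <;> assumption⟩
      · exact ⟨(0,1), fun e => by
          rcases e4G2 e with rfl|rfl|rfl|rfl <;>
            simp only [Prod.mk_add_mk, add_zero, zero_add, honeoneG2] <;> assumption⟩
      · exact ⟨(1,0), fun e => by
          rcases e4G2 e with rfl|rfl|rfl|rfl <;>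
            simp only [Prod.mk_add_mk, add_zero, zero_add, honeoneG2] <;> assumption⟩
      · exact ⟨(1,1), fun e => by
          rcases e4G2 e with rfl|rfl|rfl|rfl <;>
            simp only [Prod.mk_add_mk, add_zero, zero_add, honeoneG2] <;> assumption⟩
    · -- m = (1,0)
      have hmax3 : 1/2 ≤ p (0,0) ∨ 1/2 ≤ p (0,1) ∨ 1/2 ≤ p (1,1) := by
        rcases hmx with (h|h)|(h|h)
        · exact Or.inl h
        · exact absurd h (by rw [hm0]; norm_num)
        · exact Or.inr (Or.inl h)
        · exact Or.inr (Or.inr h)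
      have h1' : |q (0,0) - q (0,1) + q (1,1) - q (1,0)| =
          |p (0,0) - p (0,1) + p (1,1) - p (1,0)| := by
        rw [show q (0,0) - q (0,1) + q (1,1) - q (1,0) =
              q (0,0) - q (1,0) - q (0,1) + q (1,1) by ring,
            show p (0,0) - p (0,1) + p (1,1) - p (1,0) =
              p (0,0) - p (1,0) - p (0,1) + p (1,1) by ring]
        exact h3
      have h2' : |q (0,0) + q (0,1) - q (1,1) - q (1,0)| =
          |p (0,0) + p (0,1) - p (1,1) - p (1,0)| := by
        rw [show q (0,0) + q (0,1) - q (1,1) - q (1,0) =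
              q (0,0) - q (1,0) + q (0,1) - q (1,1) by ring,
            show p (0,0) + p (0,1) - p (1,1) - p (1,0) =
              p (0,0) - p (1,0) + p (0,1) - p (1,1) by ring]
        exact h1
      have h3' : |q (0,0) - q (0,1) - q (1,1) + q (1,0)| =
          |p (0,0) - p (0,1) - p (1,1) + p (1,0)| := by
        rw [show q (0,0) - q (0,1) - q (1,1) + q (1,0) =
              q (0,0) + q (1,0) - q (0,1) - q (1,1) by ring,
            show p (0,0) - p (0,1) - p (1,1) + p (1,0) =
              p (0,0) + p (1,0) - p (0,1) - p (1,1) by ring]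
        exact h2
      have hres := coreG2 (p (0,0)) (p (0,1)) (p (1,1)) (p (1,0))
        (q (0,0)) (q (0,1)) (q (1,1)) (q (1,0))
        (hpos _ (by decide)) (hpos _ (by decide)) (hpos _ (by decide)) hm0
        (by linarith) hmax3 (hqnn _) (hqnn _) (hqnn _) (hqnn _)
        (by linarith) h1' h2' h3'
      rcases hres with ⟨ha,hb,hc,hd⟩|⟨ha,hb,hc,hd⟩|⟨ha,hb,hc,hd⟩|⟨ha,hb,hc,hd⟩
      · exact ⟨(0,0), fun e => by
          rcases e4G2 e with rfl|rfl|rfl|rfl <;>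
            simp only [Prod.mk_add_mk, add_zero, zero_add, honeoneG2] <;> assumption⟩
      · exact ⟨(0,1), fun e => by
          rcases e4G2 e with rfl|rfl|rfl|rfl <;>
            simp only [Prod.mk_add_mk, add_zero, zero_add, honeoneG2] <;> assumption⟩
      · exact ⟨(1,1), fun e => by
          rcases e4G2 e with rfl|rfl|rfl|rfl <;>
            simp only [Prod.mk_add_mk, add_zero, zero_add, honeoneG2] <;> assumption⟩
      · exact ⟨(1,0), fun e => by
          rcases e4G2 e with rfl|rfl|rfl|rfl <;>
            simp only [Prod.mk_add_mk, add_zero, zero_add, honeoneG2] <;> assumption⟩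
    · -- m = (0,1)
      have hmax3 : 1/2 ≤ p (0,0) ∨ 1/2 ≤ p (1,0) ∨ 1/2 ≤ p (1,1) := by
        rcases hmx with (h|h)|(h|h)
        · exact Or.inl h
        · exact Or.inr (Or.inl h)
        · exact absurd h (by rw [hm0]; norm_num)
        · exact Or.inr (Or.inr h)
      have h1' : |q (0,0) - q (1,0) + q (1,1) - q (0,1)| =
          |p (0,0) - p (1,0) + p (1,1) - p (0,1)| := by
        rw [show q (0,0) - q (1,0) + q (1,1) - q (0,1) =
              q (0,0) - q (1,0) - q (0,1) + q (1,1) by ring,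
            show p (0,0) - p (1,0) + p (1,1) - p (0,1) =
              p (0,0) - p (1,0) - p (0,1) + p (1,1) by ring]
        exact h3
      have h2' : |q (0,0) + q (1,0) - q (1,1) - q (0,1)| =
          |p (0,0) + p (1,0) - p (1,1) - p (0,1)| := by
        rw [show q (0,0) + q (1,0) - q (1,1) - q (0,1) =
              q (0,0) + q (1,0) - q (0,1) - q (1,1) by ring,
            show p (0,0) + p (1,0) - p (1,1) - p (0,1) =
              p (0,0) + p (1,0) - p (0,1) - p (1,1) by ring]
        exact h2
      have h3' : |q (0,0) - q (1,0) - q (1,1) + q (0,1)| =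
          |p (0,0) - p (1,0) - p (1,1) + p (0,1)| := by
        rw [show q (0,0) - q (1,0) - q (1,1) + q (0,1) =
              q (0,0) - q (1,0) + q (0,1) - q (1,1) by ring,
            show p (0,0) - p (1,0) - p (1,1) + p (0,1) =
              p (0,0) - p (1,0) + p (0,1) - p (1,1) by ring]
        exact h1
      have hres := coreG2 (p (0,0)) (p (1,0)) (p (1,1)) (p (0,1))
        (q (0,0)) (q (1,0)) (q (1,1)) (q (0,1))
        (hpos _ (by decide)) (hpos _ (by decide)) (hpos _ (by decide)) hm0
        (by linarith) hmax3 (hqnn _) (hqnn _) (hqnn _) (hqnn _)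
        (by linarith) h1' h2' h3'
      rcases hres with ⟨ha,hb,hc,hd⟩|⟨ha,hb,hc,hd⟩|⟨ha,hb,hc,hd⟩|⟨ha,hb,hc,hd⟩
      · exact ⟨(0,0), fun e => by
          rcases e4G2 e with rfl|rfl|rfl|rfl <;>
            simp only [Prod.mk_add_mk, add_zero, zero_add, honeoneG2] <;> assumption⟩
      · exact ⟨(1,0), fun e => by
          rcases e4G2 e with rfl|rfl|rfl|rfl <;>
            simp only [Prod.mk_add_mk, add_zero, zero_add, honeoneG2] <;> assumption⟩
      · exact ⟨(1,1), fun e => by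
          rcases e4G2 e with rfl|rfl|rfl|rfl <;>
            simp only [Prod.mk_add_mk, add_zero, zero_add, honeoneG2] <;> assumption⟩
      · exact ⟨(0,1), fun e => by
          rcases e4G2 e with rfl|rfl|rfl|rfl <;>
            simp only [Prod.mk_add_mk, add_zero, zero_add, honeoneG2] <;> assumption⟩
    · -- m = (1,1)
      have hmax3 : 1/2 ≤ p (0,0) ∨ 1/2 ≤ p (1,0) ∨ 1/2 ≤ p (0,1) := by
        rcases hmx with (h|h)|(h|h)
        · exact Or.inl h
        · exact Or.inr (Or.inl h)
        · exact Or.inr (Or.inr h)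
        · exact absurd h (by rw [hm0]; norm_num)
      have hres := coreG2 (p (0,0)) (p (1,0)) (p (0,1)) (p (1,1))
        (q (0,0)) (q (1,0)) (q (0,1)) (q (1,1))
        (hpos _ (by decide)) (hpos _ (by decide)) (hpos _ (by decide)) hm0
        hsum4 hmax3 (hqnn _) (hqnn _) (hqnn _) (hqnn _)
        hqsum4 h1 h2 h3
      rcases hres with ⟨ha,hb,hc,hd⟩|⟨ha,hb,hc,hd⟩|⟨ha,hb,hc,hd⟩|⟨ha,hb,hc,hd⟩
      · exact ⟨(0,0), fun e => by
          rcases e4G2 e with rfl|rfl|rfl|rfl <;>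
            simp only [Prod.mk_add_mk, add_zero, zero_add, honeoneG2] <;> assumption⟩
      · exact ⟨(1,0), fun e => by
          rcases e4G2 e with rfl|rfl|rfl|rfl <;>
            simp only [Prod.mk_add_mk, add_zero, zero_add, honeoneG2] <;> assumption⟩
      · exact ⟨(0,1), fun e => by
          rcases e4G2 e with rfl|rfl|rfl|rfl <;>
            simp only [Prod.mk_add_mk, add_zero, zero_add, honeoneG2] <;> assumption⟩
      · exact ⟨(1,1), fun e => by
          rcases e4G2 e with rfl|rfl|rfl|rfl <;>
            simp only [Prod.mk_add_mk, add_zero, zero_add, honeoneG2] <;> assumption⟩
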